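/- Nonlinear WLLN under pairwise uncorrelatedness (Remark 3, first bullet): under the standing assumptions, and assuming that for each n the truncated variables are pairwise uncorrelated in the sublinear sense, i.e. 𝔼[(Y_{n,k} − μ⁺_{n,k})(Y_{n,i} − μ⁺_{n,i})] = 0 for all 1 ≤ i, k ≤ n with i ≠ k, it holds that for every ε > 0, V(S_n/n ≥ μ̄_n + ε) → 0 as n → ∞. -/

import Mathlib

open MeasureTheory Filter

noncomputable def upperExp {Ω : Type*} [MeasurableSpace Ω] (Ps : Set (Measure Ω)) (Z : Ω → ℝ) : ℝ :=
  ⨆ P : Ps, ∫ ω, Z ω ∂(P : Measure Ω)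

noncomputable def lowerExp {Ω : Type*} [MeasurableSpace Ω] (Ps : Set (Measure Ω)) (Z : Ω → ℝ) : ℝ :=
  ⨅ P : Ps, ∫ ω, Z ω ∂(P : Measure Ω)

noncomputable def upperCap {Ω : Type*} [MeasurableSpace Ω] (Ps : Set (Measure Ω)) (A : Set Ω) : ℝ :=
  ⨆ P : Ps, ((P : Measure Ω) A).toReal

noncomputable def lowerCap {Ω : Type*} [MeasurableSpace Ω] (Ps : Set (Measure Ω)) (A : Set Ω) : ℝ :=
  ⨅ P : Ps, ((P : Measure Ω) A).toReal

section helpers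
variable {Ω : Type*} [MeasurableSpace Ω] {Ps : Set (Measure Ω)}

lemma toReal_le_one {P : Measure Ω} [IsProbabilityMeasure P] (A : Set Ω) :
    (P A).toReal ≤ 1 := by
  have h := ENNReal.toReal_mono (by simp) (prob_le_one (μ := P) (s := A))
  simpa using h

lemma upperCap_bddAbove (hprob : ∀ P ∈ Ps, IsProbabilityMeasure P) (A : Set Ω) :
    BddAbove (Set.range fun P : Ps => ((P : Measure Ω) A).toReal) := by
  refine ⟨1, ?_⟩
  rintro x ⟨P, rfl⟩
  haveI := hprob P P.2
  exact toReal_le_one A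

lemma le_upperCap (hprob : ∀ P ∈ Ps, IsProbabilityMeasure P) {P : Measure Ω} (hP : P ∈ Ps)
    (A : Set Ω) : (P A).toReal ≤ upperCap Ps A :=
  le_ciSup (upperCap_bddAbove hprob A) ⟨P, hP⟩

lemma upperCap_le (hne : Ps.Nonempty) {A : Set Ω} {b : ℝ}
    (h : ∀ P ∈ Ps, ((P : Measure Ω) A).toReal ≤ b) : upperCap Ps A ≤ b := by
  haveI := hne.to_subtype
  exact ciSup_le fun P => h P P.2

lemma upperCap_nonneg (hne : Ps.Nonempty) (hprob : ∀ P ∈ Ps, IsProbabilityMeasure P)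
    (A : Set Ω) : 0 ≤ upperCap Ps A := by
  obtain ⟨P, hP⟩ := hne
  exact le_trans ENNReal.toReal_nonneg (le_upperCap hprob hP A)

lemma upperCap_le_one (hne : Ps.Nonempty) (hprob : ∀ P ∈ Ps, IsProbabilityMeasure P)
    (A : Set Ω) : upperCap Ps A ≤ 1 :=
  upperCap_le hne fun P hP => by haveI := hprob P hP; exact toReal_le_one A

lemma upperCap_mono (hne : Ps.Nonempty) (hprob : ∀ P ∈ Ps, IsProbabilityMeasure P)
    {A B : Set Ω} (hAB : A ⊆ B) : upperCap Ps A ≤ upperCap Ps B :=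
  upperCap_le hne fun P hP => by
    haveI := hprob P hP
    exact le_trans (ENNReal.toReal_mono (measure_ne_top _ _) (measure_mono hAB))
      (le_upperCap hprob hP B)

lemma upperExp_le (hne : Ps.Nonempty) {Z : Ω → ℝ} {b : ℝ}
    (h : ∀ P ∈ Ps, ∫ ω, Z ω ∂P ≤ b) : upperExp Ps Z ≤ b := by
  haveI := hne.to_subtype
  exact ciSup_le fun P => h P P.2

lemma integral_le_upperExp {Z : Ω → ℝ} {b : ℝ} (hb : ∀ Q ∈ Ps, ∫ ω, Z ω ∂Q ≤ b)
    {P : Measure Ω} (hP : P ∈ Ps) : ∫ ω, Z ω ∂P ≤ upperExp Ps Z :=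
  by
  have hbdd : BddAbove (Set.range fun Q : Ps => ∫ ω, Z ω ∂(Q : Measure Ω)) := by
    refine ⟨b, ?_⟩
    rintro x ⟨Q, rfl⟩
    exact hb Q Q.2
  exact le_ciSup hbdd (⟨P, hP⟩ : Ps)

lemma integrableOn_of_bdd {α : Type*} [MeasurableSpace α] {μ : Measure α} {f : α → ℝ}
    (hf : Measurable f) {s : Set α} (hs : MeasurableSet s) (hμ : μ s < ⊤) {C : ℝ}
    (h : ∀ x ∈ s, |f x| ≤ C) : IntegrableOn f s μ := by
  haveI : IsFiniteMeasure (μ.restrict s) := ⟨by rwa [Measure.restrict_apply_univ]⟩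
  refine Integrable.mono' (integrable_const C) hf.aestronglyMeasurable.restrict ?_
  exact (ae_restrict_iff' hs).2 (ae_of_all _ fun x hx => by simpa using h x hx)

lemma integrable_of_bdd {α : Type*} [MeasurableSpace α] {μ : Measure α} [IsFiniteMeasure μ]
    {f : α → ℝ} (hf : Measurable f) {C : ℝ} (h : ∀ x, |f x| ≤ C) : Integrable f μ :=
  Integrable.mono' (integrable_const C) hf.aestronglyMeasurable (ae_of_all _ fun x => by simpa using h x)

end helpers

set_option maxHeartbeats 2000000 in
/-- nonlinear WLLN under pairwise uncorrelatedness (Remark 3, first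
bullet): if for each n the truncated variables are pairwise uncorrelated in the
sublinear sense, then for every ε > 0, V(Sₙ/n ≥ μ̄ₙ + ε) → 0. -/
theorem nonlinear_wlln_uncorrelated
    {Ω : Type*} [MeasurableSpace Ω] (Ps : Set (Measure Ω)) (hne : Ps.Nonempty)
    (hprob : ∀ P ∈ Ps, IsProbabilityMeasure P)
    (X : ℕ → Ω → ℝ) (hX : ∀ k, Measurable (X k))
    (χ : ℕ → ℝ → ℝ)
    (hχLip : ∀ n, ∃ K : NNReal, LipschitzWith K (χ n))
    (hχone : ∀ n : ℕ, ∀ x : ℝ, |x| ≤ (n : ℝ) → χ n x = 1)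
    (hχzero : ∀ n : ℕ, ∀ x : ℝ, (n : ℝ) + 1 ≤ |x| → χ n x = 0)
    (hχrange : ∀ n : ℕ, ∀ x : ℝ, χ n x ∈ Set.Icc (0 : ℝ) 1)
    (Y : ℕ → ℕ → Ω → ℝ) (hY : ∀ n k, Y n k = fun ω => X k ω * χ n |X k ω|)
    (S : ℕ → Ω → ℝ) (hS : ∀ n, S n = fun ω => ∑ k ∈ Finset.Icc 1 n, X k ω)
    (ψ : ℕ → ℝ → ℝ)
    (hψ : ∀ n : ℕ, ∀ y : ℝ, ψ n y = ∑ k ∈ Finset.Icc 1 n, y * upperCap Ps {ω | (n : ℝ) * y < |X k ω|})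
    (hψ0 : ∀ y ∈ Set.Icc (0 : ℝ) 1, Tendsto (fun n => ψ n y) atTop (nhds 0))
    (hUI : UniformIntegrable (fun n : ℕ => ψ n) 1 (volume.restrict (Set.Icc (0 : ℝ) 1)))
    (μp : ℕ → ℕ → ℝ) (hμp : ∀ n k, μp n k = upperExp Ps (Y n k))
    (μbar : ℕ → ℝ) (hμbar : ∀ n : ℕ, μbar n = (1 / (n : ℝ)) * ∑ k ∈ Finset.Icc 1 n, μp n k)
    (huncorr : ∀ n : ℕ, ∀ i ∈ Finset.Icc 1 n, ∀ k ∈ Finset.Icc 1 n, i ≠ k →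
      upperExp Ps (fun ω => (Y n k ω - μp n k) * (Y n i ω - μp n i)) = 0)
    :
    ∀ ε : ℝ, 0 < ε →
      Tendsto (fun n => upperCap Ps {ω | μbar n + ε ≤ S n ω / n}) atTop (nhds 0) := by
  intro ε hε
  -- basic facts
  have hYmeas : ∀ n k, Measurable (Y n k) := by
    intro n k
    simp only [hY]
    exact (hX k).mul (((hχLip n).choose_spec.continuous.measurable).comp (hX k).abs)
  have hYabsX : ∀ n k ω, |Y n k ω| ≤ |X k ω| := by
    intro n k ω
    simp only [hY, abs_mul]
    have h1 : |χ n (|X k ω|)| ≤ 1 := by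
      rw [abs_le]
      refine ⟨by linarith [(hχrange n (|X k ω|)).1], (hχrange n (|X k ω|)).2⟩
    calc |X k ω| * |χ n (|X k ω|)| ≤ |X k ω| * 1 :=
          mul_le_mul_of_nonneg_left h1 (abs_nonneg _)
      _ = |X k ω| := mul_one _
  have hYbdd : ∀ (n k : ℕ) ω, |Y n k ω| ≤ (n : ℝ) + 1 := by
    intro n k ω
    by_cases hc : (n : ℝ) + 1 ≤ |X k ω|
    · have : χ n |X k ω| = 0 := hχzero n _ (by rwa [abs_abs])
      simp only [hY, this, mul_zero, abs_zero]
      positivity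
    · exact le_trans (hYabsX n k ω) (le_of_not_ge hc)
  have hYint : ∀ (P : Measure Ω), P ∈ Ps → ∀ (n k : ℕ), Integrable (Y n k) P := by
    intro P hP n k
    haveI := hprob P hP
    exact integrable_of_bdd (hYmeas n k) (hYbdd n k)
  have hintY_le : ∀ (P : Measure Ω), P ∈ Ps → ∀ (n k : ℕ), ∫ ω, Y n k ω ∂P ≤ (n : ℝ) + 1 := by
    intro P hP n k
    haveI := hprob P hP
    calc ∫ ω, Y n k ω ∂P ≤ ∫ _, ((n : ℝ) + 1) ∂P := by
          refine integral_mono (hYint P hP n k) (integrable_const _) fun ω => ?_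
          exact le_trans (le_abs_self _) (hYbdd n k ω)
      _ = (n : ℝ) + 1 := by simp
  have hintY_ge : ∀ (P : Measure Ω), P ∈ Ps → ∀ (n k : ℕ), -((n : ℝ) + 1) ≤ ∫ ω, Y n k ω ∂P := by
    intro P hP n k
    haveI := hprob P hP
    calc -((n : ℝ) + 1) = ∫ _, -((n : ℝ) + 1) ∂P := by simp
      _ ≤ ∫ ω, Y n k ω ∂P := by
          refine integral_mono (integrable_const _) (hYint P hP n k) fun ω => ?_
          exact neg_le_of_abs_le (hYbdd n k ω)
  have hmk_le : ∀ (P : Measure Ω), P ∈ Ps → ∀ (n k : ℕ), ∫ ω, Y n k ω ∂P ≤ μp n k := by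
    intro P hP n k
    rw [hμp]
    exact integral_le_upperExp (fun Q hQ => hintY_le Q hQ n k) hP
  have hμp_le : ∀ (n k : ℕ), μp n k ≤ (n : ℝ) + 1 := by
    intro n k
    rw [hμp]
    exact upperExp_le hne fun Q hQ => hintY_le Q hQ n k
  have hμp_abs : ∀ (n k : ℕ), |μp n k| ≤ (n : ℝ) + 1 := by
    intro n k
    obtain ⟨P, hP⟩ := hne
    rw [abs_le]
    refine ⟨le_trans (hintY_ge P hP n k) (hmk_le P hP n k), hμp_le n k⟩
  -- the single-measure bound
  have key : ∀ n : ℕ, 1 ≤ n → ∀ P : Measure Ω, P ∈ Ps →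
      (P {ω | μbar n + ε ≤ S n ω / n}).toReal ≤
        ψ n 1 + 2 / ε ^ 2 * ∫ y in (0 : ℝ)..(((n : ℝ) + 1) / n), ψ n y := by
    intro n hn P hP
    haveI := hprob P hP
    have hn0 : (0:ℝ) < n := by exact_mod_cast hn
    have hnne : (n:ℝ) ≠ 0 := ne_of_gt hn0
    set m : ℕ → ℝ := fun k => ∫ ω, Y n k ω ∂P with hm
    set Z : Ω → ℝ := fun ω => ∑ k ∈ Finset.Icc 1 n, (Y n k ω - m k) with hZdef
    have hmabs : ∀ k, |m k| ≤ (n:ℝ)+1 := fun k =>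
      abs_le.mpr ⟨hintY_ge P hP n k, hintY_le P hP n k⟩
    have hZmeas : Measurable Z :=
      Finset.measurable_sum _ fun k _ => (hYmeas n k).sub measurable_const
    have hfabs : ∀ k ω, |Y n k ω - m k| ≤ 2*((n:ℝ)+1) := by
      intro k ω
      rw [sub_eq_add_neg]
      refine (abs_add_le _ _).trans ?_
      rw [abs_neg]
      linarith [hYbdd n k ω, hmabs k]
    -- event inclusion
    have hsub : {ω | μbar n + ε ≤ S n ω / n} ⊆
        (⋃ k ∈ Finset.Icc 1 n, {ω | (n:ℝ) < |X k ω|}) ∪ {ω | (n:ℝ)*ε ≤ Z ω} := by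
      intro ω hω
      simp only [Set.mem_setOf_eq] at hω
      by_cases hBc : ∃ k ∈ Finset.Icc 1 n, (n:ℝ) < |X k ω|
      · left
        obtain ⟨k, hk, hk'⟩ := hBc
        exact Set.mem_biUnion hk hk'
      · right
        push_neg at hBc
        have hXY : ∀ k ∈ Finset.Icc 1 n, Y n k ω = X k ω := by
          intro k hk
          have h1 : χ n (|X k ω|) = 1 := hχone n _ (by rw [abs_abs]; exact hBc k hk)
          simp only [hY, h1, mul_one]
        have hSY : S n ω = ∑ k ∈ Finset.Icc 1 n, Y n k ω := by
          rw [hS]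
          exact Finset.sum_congr rfl fun k hk => (hXY k hk).symm
        have h2 : (μbar n + ε) * n ≤ S n ω := (le_div_iff₀ hn0).mp hω
        have h3 : (n:ℝ) * μbar n = ∑ k ∈ Finset.Icc 1 n, μp n k := by
          rw [hμbar]; field_simp
        have h4 : ∑ k ∈ Finset.Icc 1 n, m k ≤ ∑ k ∈ Finset.Icc 1 n, μp n k :=
          Finset.sum_le_sum fun k _ => hmk_le P hP n k
        have h5 : Z ω = ∑ k ∈ Finset.Icc 1 n, Y n k ω - ∑ k ∈ Finset.Icc 1 n, m k := by
          rw [hZdef]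
          exact Finset.sum_sub_distrib _ _
        simp only [Set.mem_setOf_eq]
        rw [hSY] at h2
        rw [h5]
        nlinarith [h2, h3, h4]
    -- bound on the union part
    have hB : (P (⋃ k ∈ Finset.Icc 1 n, {ω | (n:ℝ) < |X k ω|})).toReal ≤ ψ n 1 := by
      have h1 : P (⋃ k ∈ Finset.Icc 1 n, {ω | (n:ℝ) < |X k ω|}) ≤
          ∑ k ∈ Finset.Icc 1 n, P {ω | (n:ℝ) < |X k ω|} := measure_biUnion_finset_le _ _
      have hne_top : ∑ k ∈ Finset.Icc 1 n, P {ω | (n:ℝ) < |X k ω|} ≠ ⊤ := by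
        refine ENNReal.sum_ne_top.mpr fun k _ => measure_ne_top _ _
      calc (P (⋃ k ∈ Finset.Icc 1 n, {ω | (n:ℝ) < |X k ω|})).toReal
          ≤ (∑ k ∈ Finset.Icc 1 n, P {ω | (n:ℝ) < |X k ω|}).toReal :=
            ENNReal.toReal_mono hne_top h1
        _ = ∑ k ∈ Finset.Icc 1 n, (P {ω | (n:ℝ) < |X k ω|}).toReal :=
            ENNReal.toReal_sum fun k _ => measure_ne_top _ _
        _ ≤ ∑ k ∈ Finset.Icc 1 n, upperCap Ps {ω | (n:ℝ) < |X k ω|} :=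
            Finset.sum_le_sum fun k _ => le_upperCap hprob hP _
        _ = ψ n 1 := by rw [hψ]; simp [mul_one]
    -- integrability facts
    have hprod_int : ∀ i k : ℕ, Integrable (fun ω => (Y n k ω - m k) * (Y n i ω - m i)) P := by
      intro i k
      refine integrable_of_bdd (((hYmeas n k).sub measurable_const).mul
        ((hYmeas n i).sub measurable_const)) (C := (2*((n:ℝ)+1))^2) fun ω => ?_
      rw [abs_mul, sq]
      exact mul_le_mul (hfabs k ω) (hfabs i ω) (abs_nonneg _) (by positivity)
    have hY2int : ∀ k, Integrable (fun ω => Y n k ω ^ 2) P := by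
      intro k
      refine integrable_of_bdd ((hYmeas n k).pow_const 2) (C := ((n:ℝ)+1)^2) fun ω => ?_
      rw [abs_of_nonneg (sq_nonneg _), ← sq_abs]
      exact pow_le_pow_left₀ (abs_nonneg _) (hYbdd n k ω) 2
    have hmk : ∀ k, ∫ ω, Y n k ω ∂P = m k := fun k => rfl
    -- diagonal bound
    have hdiag : ∀ k, ∫ ω, (Y n k ω - m k)^2 ∂P ≤ ∫ ω, Y n k ω ^2 ∂P := by
      intro k
      have h1 : ∫ ω, (Y n k ω - m k)^2 ∂P
          = ∫ ω, (Y n k ω^2 - (2*m k)*Y n k ω + m k^2) ∂P :=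
        integral_congr_ae (ae_of_all _ fun ω => by ring)
      have ha1 : Integrable (fun ω => Y n k ω^2 - (2*m k)*Y n k ω) P :=
        (hY2int k).sub ((hYint P hP n k).const_mul _)
      have ha2 : Integrable (fun ω => (2*m k)*Y n k ω) P := (hYint P hP n k).const_mul _
      rw [h1, integral_add ha1 (integrable_const _),
          integral_sub (hY2int k) ha2, integral_const_mul,
          integral_const, hmk k]
      simp only [probReal_univ, smul_eq_mul, one_mul]
      nlinarith [sq_nonneg (m k)]
    -- off-diagonal bound
    have hoff : ∀ i ∈ Finset.Icc 1 n, ∀ k ∈ Finset.Icc 1 n, i ≠ k →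
        ∫ ω, (Y n k ω - m k) * (Y n i ω - m i) ∂P ≤ 0 := by
      intro i hi k hk hik
      have ha : 0 ≤ μp n k - m k := sub_nonneg.mpr (hmk_le P hP n k)
      have hb : 0 ≤ μp n i - m i := sub_nonneg.mpr (hmk_le P hP n i)
      have hYμabs : ∀ j ω, |Y n j ω - μp n j| ≤ 2*((n:ℝ)+1) := by
        intro j ω
        rw [sub_eq_add_neg]
        refine (abs_add_le _ _).trans ?_
        rw [abs_neg]
        linarith [hYbdd n j ω, hμp_abs n j]
      have hgabs : ∀ ω, |(Y n k ω - μp n k) * (Y n i ω - μp n i)| ≤ (2*((n:ℝ)+1))^2 := by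
        intro ω
        rw [abs_mul, sq]
        exact mul_le_mul (hYμabs k ω) (hYμabs i ω) (abs_nonneg _) (by positivity)
      have hgint : ∀ (Q : Measure Ω), Q ∈ Ps →
          Integrable (fun ω => (Y n k ω - μp n k) * (Y n i ω - μp n i)) Q := by
        intro Q hQ
        haveI := hprob Q hQ
        exact integrable_of_bdd (((hYmeas n k).sub measurable_const).mul
          ((hYmeas n i).sub measurable_const)) hgabs
      have hgle : ∀ (Q : Measure Ω), Q ∈ Ps →
          ∫ ω, (Y n k ω - μp n k) * (Y n i ω - μp n i) ∂Q ≤ (2*((n:ℝ)+1))^2 := by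
        intro Q hQ
        haveI := hprob Q hQ
        calc ∫ ω, (Y n k ω - μp n k) * (Y n i ω - μp n i) ∂Q
            ≤ ∫ _, (2*((n:ℝ)+1))^2 ∂Q :=
              integral_mono (hgint Q hQ) (integrable_const _)
                (fun ω => (le_abs_self _).trans (hgabs ω))
          _ = (2*((n:ℝ)+1))^2 := by simp
      have hg0 : ∫ ω, (Y n k ω - μp n k) * (Y n i ω - μp n i) ∂P ≤ 0 := by
        have h := integral_le_upperExp hgle hP
        rwa [huncorr n i hi k hk hik] at h
      have hint1 : Integrable (fun ω => Y n i ω - μp n i) P :=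
        (hYint P hP n i).sub (integrable_const _)
      have hint2 : Integrable (fun ω => Y n k ω - μp n k) P :=
        (hYint P hP n k).sub (integrable_const _)
      have e1 : ∫ ω, (Y n i ω - μp n i) ∂P = m i - μp n i := by
        rw [integral_sub (hYint P hP n i) (integrable_const _), integral_const, hmk i]
        simp
      have e2 : ∫ ω, (Y n k ω - μp n k) ∂P = m k - μp n k := by
        rw [integral_sub (hYint P hP n k) (integrable_const _), integral_const, hmk k]
        simp
      calc ∫ ω, (Y n k ω - m k) * (Y n i ω - m i) ∂P
          = ∫ ω, ((Y n k ω - μp n k) * (Y n i ω - μp n i)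
              + (μp n k - m k)*(Y n i ω - μp n i) + (μp n i - m i)*(Y n k ω - μp n k)
              + (μp n k - m k)*(μp n i - m i)) ∂P :=
            integral_congr_ae (ae_of_all _ fun ω => by ring)
        _ = (∫ ω, (Y n k ω - μp n k) * (Y n i ω - μp n i) ∂P)
              + (μp n k - m k) * (∫ ω, (Y n i ω - μp n i) ∂P)
              + (μp n i - m i) * (∫ ω, (Y n k ω - μp n k) ∂P)
              + (μp n k - m k)*(μp n i - m i) := by
            have i1 : Integrable (fun ω => (Y n k ω - μp n k) * (Y n i ω - μp n i)
                + (μp n k - m k)*(Y n i ω - μp n i)) P := (hgint P hP).add (hint1.const_mul _)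
            have i2 : Integrable (fun ω => (Y n k ω - μp n k) * (Y n i ω - μp n i)
                + (μp n k - m k)*(Y n i ω - μp n i)
                + (μp n i - m i)*(Y n k ω - μp n k)) P := i1.add (hint2.const_mul _)
            rw [integral_add i2 (integrable_const _),
                integral_add i1 (hint2.const_mul _),
                integral_add (hgint P hP) (hint1.const_mul _),
                integral_const_mul, integral_const_mul, integral_const]
            simp
        _ ≤ 0 := by
            rw [e1, e2]
            nlinarith [hg0, ha, hb]
    -- variance expansion
    have hZsq : ∫ ω, Z ω^2 ∂P ≤ ∑ k ∈ Finset.Icc 1 n, ∫ ω, Y n k ω^2 ∂P := by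
      have hexp : ∀ ω, Z ω^2 = ∑ k ∈ Finset.Icc 1 n, ∑ i ∈ Finset.Icc 1 n,
          (Y n k ω - m k)*(Y n i ω - m i) := by
        intro ω
        rw [hZdef]
        simp only []
        rw [sq, Finset.sum_mul_sum]
      have h1 : ∫ ω, Z ω^2 ∂P = ∑ k ∈ Finset.Icc 1 n, ∑ i ∈ Finset.Icc 1 n,
          ∫ ω, (Y n k ω - m k)*(Y n i ω - m i) ∂P := by
        rw [integral_congr_ae (ae_of_all _ hexp),
          integral_finset_sum _ fun k _ => integrable_finset_sum _ fun i _ => hprod_int i k]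
        exact Finset.sum_congr rfl fun k _ =>
          integral_finset_sum _ fun i _ => hprod_int i k
      rw [h1]
      refine Finset.sum_le_sum fun k hk => ?_
      calc ∑ i ∈ Finset.Icc 1 n, ∫ ω, (Y n k ω - m k) * (Y n i ω - m i) ∂P
          ≤ ∑ i ∈ Finset.Icc 1 n, (if i = k then ∫ ω, Y n k ω^2 ∂P else 0) := by
            refine Finset.sum_le_sum fun i hi => ?_
            by_cases h : i = k
            · subst h
              rw [if_pos rfl]
              calc ∫ ω, (Y n i ω - m i) * (Y n i ω - m i) ∂P
                  = ∫ ω, (Y n i ω - m i)^2 ∂P := by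
                    refine integral_congr_ae (ae_of_all _ fun ω => ?_)
                    ring
                _ ≤ _ := hdiag i
            · rw [if_neg h]
              exact hoff i hi k hk h
        _ = ∫ ω, Y n k ω^2 ∂P := by
            rw [Finset.sum_ite_eq' _ k fun _ => ∫ ω, Y n k ω^2 ∂P, if_pos hk]
    -- Chebyshev
    have hZ2int : Integrable (fun ω => Z ω^2) P := by
      refine integrable_of_bdd (hZmeas.pow_const 2) (C := ((n:ℝ)*(2*((n:ℝ)+1)))^2) fun ω => ?_
      have hZabs : |Z ω| ≤ (n:ℝ)*(2*((n:ℝ)+1)) := by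
        rw [hZdef]
        refine (Finset.abs_sum_le_sum_abs _ _).trans ?_
        calc ∑ k ∈ Finset.Icc 1 n, |Y n k ω - m k|
            ≤ ∑ _k ∈ Finset.Icc 1 n, 2*((n:ℝ)+1) :=
              Finset.sum_le_sum fun k _ => hfabs k ω
          _ = (n:ℝ)*(2*((n:ℝ)+1)) := by
              rw [Finset.sum_const, Nat.card_Icc]
              simp [nsmul_eq_mul]
      rw [abs_of_nonneg (sq_nonneg _), ← sq_abs]
      exact pow_le_pow_left₀ (abs_nonneg _) hZabs 2
    have hcheb : (P {ω | (n:ℝ)*ε ≤ Z ω}).toReal ≤ (∫ ω, Z ω^2 ∂P) / ((n:ℝ)*ε)^2 := by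
      have hpos : 0 < ((n:ℝ)*ε)^2 := by positivity
      have hsub2 : {ω | (n:ℝ)*ε ≤ Z ω} ⊆ {ω | ((n:ℝ)*ε)^2 ≤ Z ω^2} := by
        intro ω hω
        simp only [Set.mem_setOf_eq] at hω ⊢
        exact pow_le_pow_left₀ (by positivity) hω 2
      have h1 : (P {ω | (n:ℝ)*ε ≤ Z ω}).toReal ≤ (P {ω | ((n:ℝ)*ε)^2 ≤ Z ω^2}).toReal :=
        ENNReal.toReal_mono (measure_ne_top _ _) (measure_mono hsub2)
      have h2 := mul_meas_ge_le_integral_of_nonneg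
        (ae_of_all _ fun ω => sq_nonneg (Z ω)) hZ2int (((n:ℝ)*ε)^2)
      exact h1.trans ((le_div_iff₀' hpos).mpr h2)
    -- layer cake bound for each k
    have hlayer : ∀ k : ℕ, ∫ ω, Y n k ω^2 ∂P
        ≤ 2 * ∫ s in Set.Ioc (0:ℝ) ((n:ℝ)+1), s * (P {ω | s < |X k ω|}).toReal := by
      intro k
      set G : Ω → ℝ → ℝ := fun ω s => Set.indicator {ω' : Ω | s < |X k ω'|} (fun _ => s) ω with hG
      have hGeq : ∀ ω s, G ω s = if s < |X k ω| then s else 0 := by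
        intro ω s
        rw [hG]
        simp [Set.indicator_apply]
      haveI hfinmeas : IsFiniteMeasure (volume.restrict (Set.Ioc (0:ℝ) ((n:ℝ)+1))) := by
        constructor
        rw [Measure.restrict_apply_univ]
        simp [Real.volume_Ioc]
      have hGmeas : Measurable (Function.uncurry G) := by
        have heq : Function.uncurry G = Set.indicator {p : Ω × ℝ | p.2 < |X k p.1|}
            (fun p => p.2) := by
          funext p
          have : Function.uncurry G p = G p.1 p.2 := rfl
          rw [this, hGeq]
          simp [Set.indicator_apply, Set.mem_setOf_eq]
        rw [heq]
        exact measurable_snd.indicator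
          (measurableSet_lt measurable_snd (((hX k).comp measurable_fst).abs))
      have hGbdd : ∀ ω, ∀ s ∈ Set.Ioc (0:ℝ) ((n:ℝ)+1), |G ω s| ≤ (n:ℝ)+1 := by
        intro ω s hs
        rw [hGeq]
        split
        · rw [abs_of_pos hs.1]; exact hs.2
        · rw [abs_zero]; positivity
      have hGnn : ∀ ω, ∀ s ∈ Set.Ioc (0:ℝ) ((n:ℝ)+1), 0 ≤ G ω s := by
        intro ω s hs
        rw [hGeq]
        split
        · exact le_of_lt hs.1
        · exact le_refl _
      have hGint : Integrable (Function.uncurry G)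
          (P.prod (volume.restrict (Set.Ioc (0:ℝ) ((n:ℝ)+1)))) := by
        refine Integrable.mono' (integrable_const ((n:ℝ)+1)) hGmeas.aestronglyMeasurable ?_
        rw [ae_iff]
        refine measure_mono_null (t := Set.univ ×ˢ (Set.Ioc (0:ℝ) ((n:ℝ)+1))ᶜ) ?_ ?_
        · intro p hp
          simp only [Set.mem_setOf_eq, not_le] at hp
          refine ⟨Set.mem_univ _, ?_⟩
          intro hmem
          have := hGbdd p.1 p.2 hmem
          rw [Real.norm_eq_abs] at hp
          have : |Function.uncurry G p| ≤ (n:ℝ)+1 := this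
          linarith
        · rw [Measure.prod_prod, Measure.restrict_apply measurableSet_Ioc.compl]
          simp
      have hGIntOn : ∀ ω, IntegrableOn (G ω) (Set.Ioc (0:ℝ) ((n:ℝ)+1)) volume := by
        intro ω
        have hGm : Measurable (G ω) := by
          have : G ω = Set.indicator (Set.Iio (|X k ω|)) id := by
            funext s
            rw [hGeq]
            simp [Set.indicator_apply, Set.mem_Iio]
          rw [this]
          exact measurable_id.indicator measurableSet_Iio
        refine integrableOn_of_bdd hGm measurableSet_Ioc (by simp [Real.volume_Ioc])
          (C := (n:ℝ)+1) (hGbdd ω)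
      have hpt : ∀ ω, Y n k ω^2 ≤ 2 * ∫ s in Set.Ioc (0:ℝ) ((n:ℝ)+1), G ω s := by
        intro ω
        by_cases hc : (n:ℝ)+1 ≤ |X k ω|
        · have hY0 : Y n k ω = 0 := by
            have h0 : χ n (|X k ω|) = 0 := hχzero n _ (by rwa [abs_abs])
            simp [hY, h0]
          rw [hY0]
          have h1 : 0 ≤ ∫ s in Set.Ioc (0:ℝ) ((n:ℝ)+1), G ω s :=
            setIntegral_nonneg measurableSet_Ioc (hGnn ω)
          nlinarith
        · push_neg at hc
          have ha0 : 0 ≤ |X k ω| := abs_nonneg _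
          have hY2 : Y n k ω^2 ≤ |X k ω|^2 := by
            rw [← sq_abs (Y n k ω)]
            exact pow_le_pow_left₀ (abs_nonneg _) (hYabsX n k ω) 2
          have heq1 : ∫ s in Set.Ioo (0:ℝ) (|X k ω|), G ω s = ∫ s in Set.Ioo (0:ℝ) (|X k ω|), s := by
            refine setIntegral_congr_fun measurableSet_Ioo fun s hs => ?_
            rw [hGeq, if_pos hs.2]
          have heq2 : ∫ s in Set.Ioo (0:ℝ) (|X k ω|), s = |X k ω|^2/2 := by
            rw [← integral_Ioc_eq_integral_Ioo, ← intervalIntegral.integral_of_le ha0,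
              integral_id]
            ring
          have hmono : ∫ s in Set.Ioo (0:ℝ) (|X k ω|), G ω s
              ≤ ∫ s in Set.Ioc (0:ℝ) ((n:ℝ)+1), G ω s := by
            refine setIntegral_mono_set (hGIntOn ω)
              ((ae_restrict_iff' measurableSet_Ioc).2 (ae_of_all _ (hGnn ω))) ?_
            refine HasSubset.Subset.eventuallyLE ?_
            intro s hs
            exact ⟨hs.1, le_of_lt (lt_of_lt_of_le hs.2 (le_of_lt hc))⟩
          nlinarith [heq1, heq2, hmono]
      have hinner_int : Integrable (fun ω => ∫ s in Set.Ioc (0:ℝ) ((n:ℝ)+1), G ω s) P :=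
        hGint.integral_prod_left
      have h2 : ∫ ω, Y n k ω^2 ∂P ≤ ∫ ω, (2 * ∫ s in Set.Ioc (0:ℝ) ((n:ℝ)+1), G ω s) ∂P :=
        integral_mono (hY2int k) (hinner_int.const_mul 2) hpt
      have h3 : ∫ ω, (2 * ∫ s in Set.Ioc (0:ℝ) ((n:ℝ)+1), G ω s) ∂P
          = 2 * ∫ ω, (∫ s in Set.Ioc (0:ℝ) ((n:ℝ)+1), G ω s) ∂P := integral_const_mul 2 _
      have h4 : ∫ ω, (∫ s in Set.Ioc (0:ℝ) ((n:ℝ)+1), G ω s) ∂P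
          = ∫ s in Set.Ioc (0:ℝ) ((n:ℝ)+1), (∫ ω, G ω s ∂P) := integral_integral_swap hGint
      have h5 : ∀ s : ℝ, ∫ ω, G ω s ∂P = s * (P {ω | s < |X k ω|}).toReal := by
        intro s
        rw [hG]
        rw [integral_indicator_const (e := s) (measurableSet_lt measurable_const (hX k).abs)]
        simp [mul_comm, measureReal_def]
      calc ∫ ω, Y n k ω^2 ∂P
          ≤ 2 * ∫ ω, (∫ s in Set.Ioc (0:ℝ) ((n:ℝ)+1), G ω s) ∂P := by rw [← h3]; exact h2
        _ = 2 * ∫ s in Set.Ioc (0:ℝ) ((n:ℝ)+1), (∫ ω, G ω s ∂P) := by rw [h4]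
        _ = 2 * ∫ s in Set.Ioc (0:ℝ) ((n:ℝ)+1), s * (P {ω | s < |X k ω|}).toReal := by
            simp only [h5]
    -- replace P by the upper capacity and substitute s = n y
    have hVmeas : ∀ k : ℕ, Measurable (fun s : ℝ => upperCap Ps {ω | s < |X k ω|}) := by
      intro k
      refine Antitone.measurable fun s t hst => ?_
      exact upperCap_mono hne hprob fun ω hω => lt_of_le_of_lt hst hω
    have hPmeas : ∀ k : ℕ, Measurable (fun s : ℝ => (P {ω | s < |X k ω|}).toReal) := by
      intro k
      refine Antitone.measurable fun s t hst => ?_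
      exact ENNReal.toReal_mono (measure_ne_top _ _)
        (measure_mono fun ω hω => lt_of_le_of_lt hst hω)
    have hPint : ∀ k : ℕ, IntegrableOn (fun s : ℝ => s * (P {ω | s < |X k ω|}).toReal)
        (Set.Ioc (0:ℝ) ((n:ℝ)+1)) volume := by
      intro k
      refine integrableOn_of_bdd (measurable_id.mul (hPmeas k)) measurableSet_Ioc
        (by simp [Real.volume_Ioc]) (C := (n:ℝ)+1) fun s hs => ?_
      show |s * (P {ω | s < |X k ω|}).toReal| ≤ (n:ℝ)+1
      rw [abs_mul, abs_of_pos hs.1, abs_of_nonneg ENNReal.toReal_nonneg]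
      calc s * (P {ω | s < |X k ω|}).toReal ≤ ((n:ℝ)+1) * 1 :=
            mul_le_mul hs.2 (toReal_le_one _) ENNReal.toReal_nonneg (by positivity)
        _ = (n:ℝ)+1 := mul_one _
    have hVint : ∀ k : ℕ, IntegrableOn (fun s : ℝ => s * upperCap Ps {ω | s < |X k ω|})
        (Set.Ioc (0:ℝ) ((n:ℝ)+1)) volume := by
      intro k
      refine integrableOn_of_bdd (measurable_id.mul (hVmeas k)) measurableSet_Ioc
        (by simp [Real.volume_Ioc]) (C := (n:ℝ)+1) fun s hs => ?_
      show |s * upperCap Ps {ω | s < |X k ω|}| ≤ (n:ℝ)+1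
      rw [abs_mul, abs_of_pos hs.1, abs_of_nonneg (upperCap_nonneg hne hprob _)]
      calc s * upperCap Ps {ω | s < |X k ω|} ≤ ((n:ℝ)+1) * 1 :=
            mul_le_mul hs.2 (upperCap_le_one hne hprob _)
              (upperCap_nonneg hne hprob _) (by positivity)
        _ = (n:ℝ)+1 := mul_one _
    have hPleV : ∀ k : ℕ, ∫ s in Set.Ioc (0:ℝ) ((n:ℝ)+1), s * (P {ω | s < |X k ω|}).toReal
        ≤ ∫ s in Set.Ioc (0:ℝ) ((n:ℝ)+1), s * upperCap Ps {ω | s < |X k ω|} := by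
      intro k
      refine setIntegral_mono_on (hPint k) (hVint k) measurableSet_Ioc fun s hs => ?_
      exact mul_le_mul_of_nonneg_left (le_upperCap hprob hP _) (le_of_lt hs.1)
    have hsubst : ∑ k ∈ Finset.Icc 1 n,
        ∫ s in Set.Ioc (0:ℝ) ((n:ℝ)+1), s * upperCap Ps {ω | s < |X k ω|}
        = (n:ℝ)^2 * ∫ y in (0:ℝ)..(((n:ℝ)+1)/n), ψ n y := by
      set F : ℝ → ℝ := fun s => ∑ k ∈ Finset.Icc 1 n, s * upperCap Ps {ω | s < |X k ω|} with hF
      have hsum : ∑ k ∈ Finset.Icc 1 n,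
          ∫ s in Set.Ioc (0:ℝ) ((n:ℝ)+1), s * upperCap Ps {ω | s < |X k ω|}
          = ∫ s in Set.Ioc (0:ℝ) ((n:ℝ)+1), F s := by
        rw [hF]
        exact (integral_finset_sum _ fun k _ => hVint k).symm
      have h0le : (0:ℝ) ≤ (n:ℝ)+1 := by positivity
      have hcomp : (n:ℝ) • (∫ y in (0:ℝ)..(((n:ℝ)+1)/n), F ((n:ℝ)*y))
          = ∫ x in ((n:ℝ)*0)..((n:ℝ)*(((n:ℝ)+1)/n)), F x :=
        intervalIntegral.smul_integral_comp_mul_left F (n:ℝ)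
      rw [mul_zero, mul_div_cancel₀ _ hnne] at hcomp
      have hFn : ∀ y : ℝ, F ((n:ℝ)*y) = (n:ℝ) * ψ n y := by
        intro y
        rw [hF, hψ, Finset.mul_sum]
        exact Finset.sum_congr rfl fun k _ => by ring
      rw [hsum, ← intervalIntegral.integral_of_le h0le, ← hcomp]
      simp only [hFn]
      rw [intervalIntegral.integral_const_mul]
      rw [smul_eq_mul]
      ring
    -- assemble the Chebyshev side
    have hCbound : (P {ω | (n:ℝ)*ε ≤ Z ω}).toReal
        ≤ 2/ε^2 * ∫ y in (0:ℝ)..(((n:ℝ)+1)/n), ψ n y := by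
      have hchain : ∫ ω, Z ω^2 ∂P
          ≤ 2 * ((n:ℝ)^2 * ∫ y in (0:ℝ)..(((n:ℝ)+1)/n), ψ n y) := by
        calc ∫ ω, Z ω^2 ∂P ≤ ∑ k ∈ Finset.Icc 1 n, ∫ ω, Y n k ω^2 ∂P := hZsq
          _ ≤ ∑ k ∈ Finset.Icc 1 n,
              2 * ∫ s in Set.Ioc (0:ℝ) ((n:ℝ)+1), s * (P {ω | s < |X k ω|}).toReal :=
            Finset.sum_le_sum fun k _ => hlayer k
          _ ≤ ∑ k ∈ Finset.Icc 1 n,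
              2 * ∫ s in Set.Ioc (0:ℝ) ((n:ℝ)+1), s * upperCap Ps {ω | s < |X k ω|} :=
            Finset.sum_le_sum fun k _ => by linarith [hPleV k]
          _ = 2 * ∑ k ∈ Finset.Icc 1 n,
              ∫ s in Set.Ioc (0:ℝ) ((n:ℝ)+1), s * upperCap Ps {ω | s < |X k ω|} := by
            rw [Finset.mul_sum]
          _ = 2 * ((n:ℝ)^2 * ∫ y in (0:ℝ)..(((n:ℝ)+1)/n), ψ n y) := by rw [hsubst]
      have hpos : (0:ℝ) < ((n:ℝ)*ε)^2 := by positivity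
      calc (P {ω | (n:ℝ)*ε ≤ Z ω}).toReal ≤ (∫ ω, Z ω^2 ∂P) / ((n:ℝ)*ε)^2 := hcheb
        _ ≤ (2 * ((n:ℝ)^2 * ∫ y in (0:ℝ)..(((n:ℝ)+1)/n), ψ n y)) / ((n:ℝ)*ε)^2 := by
            gcongr
        _ = 2/ε^2 * ∫ y in (0:ℝ)..(((n:ℝ)+1)/n), ψ n y := by
            field_simp
    -- final assembly
    have hABC : (P {ω | μbar n + ε ≤ S n ω / n}).toReal
        ≤ (P (⋃ k ∈ Finset.Icc 1 n, {ω | (n:ℝ) < |X k ω|})).toReal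
          + (P {ω | (n:ℝ)*ε ≤ Z ω}).toReal := by
      have h1 : P {ω | μbar n + ε ≤ S n ω / n}
          ≤ P (⋃ k ∈ Finset.Icc 1 n, {ω | (n:ℝ) < |X k ω|}) + P {ω | (n:ℝ)*ε ≤ Z ω} :=
        le_trans (measure_mono hsub) (measure_union_le _ _)
      have h2 := ENNReal.toReal_mono
        (ENNReal.add_ne_top.mpr ⟨measure_ne_top _ _, measure_ne_top _ _⟩) h1
      rwa [ENNReal.toReal_add (measure_ne_top _ _) (measure_ne_top _ _)] at h2
    exact hABC.trans (add_le_add hB hCbound)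
  -- finite measure instance
  haveI hfin : IsFiniteMeasure (volume.restrict (Set.Icc (0:ℝ) 1)) := by
    constructor
    rw [Measure.restrict_apply_univ]
    simp [Real.volume_Icc]
  have hψ1 : Tendsto (fun n => ψ n 1) atTop (nhds 0) := hψ0 1 ⟨zero_le_one, le_refl 1⟩
  have hψ1nn : ∀ n : ℕ, 0 ≤ ψ n 1 := by
    intro n
    rw [hψ]
    refine Finset.sum_nonneg fun k _ => ?_
    have := upperCap_nonneg hne hprob {ω | (n:ℝ)*1 < |X k ω|}
    linarith
  have hψmeas : ∀ n : ℕ, Measurable (ψ n) := by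
    intro n
    have hfe : ψ n = fun y => ∑ k ∈ Finset.Icc 1 n,
        y * upperCap Ps {ω | (n:ℝ)*y < |X k ω|} := funext (hψ n)
    rw [hfe]
    refine Finset.measurable_sum _ fun k _ => ?_
    refine measurable_id.mul ?_
    have hmV : Measurable (fun s : ℝ => upperCap Ps {ω | s < |X k ω|}) :=
      Antitone.measurable fun s t hst =>
        upperCap_mono hne hprob fun ω hω => lt_of_le_of_lt hst hω
    exact hmV.comp (measurable_const_mul _)
  have hψbdd : ∀ (n : ℕ) (y : ℝ), |ψ n y| ≤ (n:ℝ) * |y| := by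
    intro n y
    calc |ψ n y| = |∑ k ∈ Finset.Icc 1 n, y * upperCap Ps {ω | (n:ℝ)*y < |X k ω|}| := by
          rw [hψ]
      _ ≤ ∑ k ∈ Finset.Icc 1 n, |y * upperCap Ps {ω | (n:ℝ)*y < |X k ω|}| :=
          Finset.abs_sum_le_sum_abs _ _
      _ ≤ ∑ _k ∈ Finset.Icc 1 n, |y| := by
          refine Finset.sum_le_sum fun k _ => ?_
          rw [abs_mul]
          calc |y| * |upperCap Ps {ω | (n:ℝ)*y < |X k ω|}| ≤ |y| * 1 := by
                refine mul_le_mul_of_nonneg_left ?_ (abs_nonneg _)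
                rw [abs_of_nonneg (upperCap_nonneg hne hprob _)]
                exact upperCap_le_one hne hprob _
            _ = |y| := mul_one _
      _ = (n:ℝ) * |y| := by
          rw [Finset.sum_const, Nat.card_Icc]
          simp [nsmul_eq_mul]
  have hψII : ∀ (n : ℕ) (a b : ℝ), IntervalIntegrable (ψ n) volume a b := by
    intro n a b
    have key' : ∀ c d : ℝ, IntegrableOn (ψ n) (Set.Ioc c d) volume := by
      intro c d
      refine integrableOn_of_bdd (hψmeas n) measurableSet_Ioc measure_Ioc_lt_top
        (C := (n:ℝ)*(|c|+|d|)) fun y hy => ?_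
      refine (hψbdd n y).trans ?_
      have h2 : |y| ≤ |c| + |d| := by
        have h3 : |y| ≤ max |c| |d| := abs_le_max_abs_abs hy.1.le hy.2
        have hm : max |c| |d| ≤ |c| + |d| :=
          max_le (le_add_of_nonneg_right (abs_nonneg _)) (le_add_of_nonneg_left (abs_nonneg _))
        linarith
      have hn0 : (0:ℝ) ≤ n := Nat.cast_nonneg n
      nlinarith
    exact ⟨key' a b, key' b a⟩
  -- Vitali convergence
  have hL : Tendsto (fun n => (eLpNorm (ψ n) 1 (volume.restrict (Set.Icc (0:ℝ) 1))).toReal)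
      atTop (nhds 0) := by
    have hmeasure : TendstoInMeasure (volume.restrict (Set.Icc (0:ℝ) 1)) (fun n => ψ n) atTop 0 := by
      refine tendstoInMeasure_of_tendsto_ae (fun n => hUI.1 n) ?_
      refine (ae_restrict_iff' measurableSet_Icc).2 (ae_of_all _ fun y hy => ?_)
      simpa using hψ0 y hy
    have hlp := tendsto_Lp_finite_of_tendstoInMeasure (le_refl 1) (by simp)
      (fun n => hUI.1 n) MemLp.zero hUI.2.1 hmeasure
    simp only [sub_zero] at hlp
    have hcomp := (ENNReal.tendsto_toReal (a := (0:ENNReal)) (by simp)).comp hlp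
    simpa [Function.comp_def] using hcomp
  have hKL : ∀ n : ℕ, (∫ y in (0:ℝ)..1, ψ n y)
      ≤ (eLpNorm (ψ n) 1 (volume.restrict (Set.Icc (0:ℝ) 1))).toReal := by
    intro n
    have h1 : (∫ y in (0:ℝ)..1, ψ n y) = ∫ y in Set.Icc (0:ℝ) 1, ψ n y := by
      rw [intervalIntegral.integral_of_le zero_le_one, integral_Icc_eq_integral_Ioc]
    have h3 := norm_integral_le_integral_norm (μ := volume.restrict (Set.Icc (0:ℝ) 1)) (ψ n)
    have h4 : ∫ y, ‖ψ n y‖ ∂(volume.restrict (Set.Icc (0:ℝ) 1))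
        = (∫⁻ y, ‖ψ n y‖₊ ∂(volume.restrict (Set.Icc (0:ℝ) 1))).toReal :=
      integral_norm_eq_lintegral_enorm (hUI.1 n)
    have h5 : eLpNorm (ψ n) 1 (volume.restrict (Set.Icc (0:ℝ) 1))
        = ∫⁻ y, ‖ψ n y‖₊ ∂(volume.restrict (Set.Icc (0:ℝ) 1)) :=
      eLpNorm_one_eq_lintegral_enorm
    rw [h1, h5, ← h4]
    calc ∫ y in Set.Icc (0:ℝ) 1, ψ n y ≤ ‖∫ y in Set.Icc (0:ℝ) 1, ψ n y‖ := le_abs_self _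
      _ ≤ ∫ y, ‖ψ n y‖ ∂(volume.restrict (Set.Icc (0:ℝ) 1)) := h3
  -- tail integral bound
  have htail : ∀ n : ℕ, 1 ≤ n → (∫ y in (1:ℝ)..(((n:ℝ)+1)/n), ψ n y) ≤ 2 * ψ n 1 := by
    intro n hn
    have hn0 : (0:ℝ) < n := by exact_mod_cast hn
    have hnne : (n:ℝ) ≠ 0 := ne_of_gt hn0
    have hn1 : (1:ℝ) ≤ n := by exact_mod_cast hn
    have h1n : (1:ℝ) ≤ ((n:ℝ)+1)/n := by
      rw [le_div_iff₀ hn0]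
      linarith
    have hupper : ((n:ℝ)+1)/n ≤ 2 := by
      rw [div_le_iff₀ hn0]
      linarith
    have hpt : ∀ y ∈ Set.Icc (1:ℝ) (((n:ℝ)+1)/n), ψ n y ≤ 2 * ψ n 1 := by
      intro y hy
      rw [hψ n y, hψ n 1, Finset.mul_sum]
      refine Finset.sum_le_sum fun k _ => ?_
      have hV1 : upperCap Ps {ω | (n:ℝ)*y < |X k ω|}
          ≤ upperCap Ps {ω | (n:ℝ)*1 < |X k ω|} := by
        refine upperCap_mono hne hprob fun ω hω => ?_
        simp only [Set.mem_setOf_eq] at hω ⊢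
        have h6 : (n:ℝ)*1 ≤ (n:ℝ)*y := by nlinarith [hy.1]
        linarith
      have hVnn : 0 ≤ upperCap Ps {ω | (n:ℝ)*y < |X k ω|} := upperCap_nonneg hne hprob _
      have hy2 : y ≤ 2 := le_trans hy.2 hupper
      calc y * upperCap Ps {ω | (n:ℝ)*y < |X k ω|}
          ≤ 2 * upperCap Ps {ω | (n:ℝ)*1 < |X k ω|} :=
            mul_le_mul hy2 hV1 hVnn (by norm_num)
        _ = 2 * (1 * upperCap Ps {ω | (n:ℝ)*1 < |X k ω|}) := by ring
    have hmono := intervalIntegral.integral_mono_on h1n (hψII n 1 (((n:ℝ)+1)/n))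
      intervalIntegrable_const hpt
    rw [intervalIntegral.integral_const] at hmono
    have hc : ((n:ℝ)+1)/n - 1 ≤ 1 := by
      have h7 : ((n:ℝ)+1)/n - 1 = 1/n := by field_simp; ring
      rw [h7]
      rw [div_le_one hn0]
      linarith
    have hc0 : 0 ≤ 2 * ψ n 1 := by linarith [hψ1nn n]
    calc (∫ y in (1:ℝ)..(((n:ℝ)+1)/n), ψ n y) ≤ (((n:ℝ)+1)/n - 1) • (2 * ψ n 1) := hmono
      _ = (((n:ℝ)+1)/n - 1) * (2 * ψ n 1) := by rw [smul_eq_mul]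
      _ ≤ 1 * (2 * ψ n 1) := mul_le_mul_of_nonneg_right hc hc0
      _ = 2 * ψ n 1 := one_mul _
  -- final squeeze
  refine squeeze_zero' (g := fun n => ψ n 1 + 2/ε^2 *
      ((eLpNorm (ψ n) 1 (volume.restrict (Set.Icc (0:ℝ) 1))).toReal + 2 * ψ n 1))
    (Eventually.of_forall fun n => upperCap_nonneg hne hprob _) ?_ ?_
  case _ =>
    refine eventually_atTop.2 ⟨1, fun n hn => ?_⟩
    show upperCap Ps {ω | μbar n + ε ≤ S n ω / n} ≤ ψ n 1 + 2/ε^2 *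
      ((eLpNorm (ψ n) 1 (volume.restrict (Set.Icc (0:ℝ) 1))).toReal + 2 * ψ n 1)
    have hkey : upperCap Ps {ω | μbar n + ε ≤ S n ω / n}
        ≤ ψ n 1 + 2/ε^2 * ∫ y in (0:ℝ)..(((n:ℝ)+1)/n), ψ n y :=
      upperCap_le hne fun P hP => key n hn P hP
    refine hkey.trans ?_
    have hJ : (∫ y in (0:ℝ)..(((n:ℝ)+1)/n), ψ n y)
        ≤ (eLpNorm (ψ n) 1 (volume.restrict (Set.Icc (0:ℝ) 1))).toReal + 2 * ψ n 1 := by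
      have hsplit := intervalIntegral.integral_add_adjacent_intervals
        (hψII n 0 1) (hψII n 1 (((n:ℝ)+1)/n))
      rw [← hsplit]
      exact add_le_add (hKL n) (htail n hn)
    have h2 : (0:ℝ) ≤ 2/ε^2 := by positivity
    have := mul_le_mul_of_nonneg_left hJ h2
    linarith
  case _ =>
    have hg : Tendsto (fun n => ψ n 1 + 2/ε^2 *
        ((eLpNorm (ψ n) 1 (volume.restrict (Set.Icc (0:ℝ) 1))).toReal + 2 * ψ n 1))
        atTop (nhds (0 + 2/ε^2 * (0 + 2*0))) :=
      Tendsto.add hψ1 (Tendsto.const_mul _ (Tendsto.add hL (Tendsto.const_mul _ hψ1)))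
    simpa using hg
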